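/- Let 0 < q < 1, t ∈ ℂ with Re(t) > 0, and k_1,...,k_n ∈ ℤ with k_1 ≠ 0. Then the nested series Σ_{m_1 > m_2 > ... > m_n > 0} q^{(|k_1|m_1 + ... + |k_n|m_n)t} / ((1-q^{m_1})^{k_1} ⋯ (1-q^{m_n})^{k_n}) converges absolutely. -/

import Mathlib

open Complex

private lemma summable_pi_geom (s : ℝ) (hs0 : 0 ≤ s) (hs1 : s < 1) :
    ∀ n : ℕ, Summable (fun v : Fin n → ℕ => ∏ i, s ^ (v i)) := by
  intro n
  induction n with
  | zero =>
      simp only [Finset.univ_eq_empty, Finset.prod_empty]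
      exact summable_of_finite_support (Set.toFinite _)
  | succ n ih =>
      have hgeom : Summable (fun m : ℕ => s ^ m) :=
        summable_geometric_of_lt_one hs0 hs1
      have h := (hgeom.mul_of_nonneg ih
        (fun m => pow_nonneg hs0 m)
        (fun v => Finset.prod_nonneg fun i _ => pow_nonneg hs0 _))
      have := h.comp_injective (Fin.consEquiv (fun _ : Fin (n + 1) => ℕ)).symm.injective
      refine this.congr fun v => ?_
      simp only [Fin.consEquiv, Equiv.coe_fn_symm_mk, Equiv.coe_fn_mk, Function.comp_apply, Fin.prod_univ_succ]
      rfl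

/-- Absolute convergence of the modified `q`-multiple zeta series
`∑_{m₁>⋯>mₙ>0} q^{(|k₁|m₁+⋯+|kₙ|mₙ)t} / ∏ⱼ (1-q^{mⱼ})^{kⱼ}`
for `0 < q < 1`, `Re t > 0` and integer exponents with `k₁ ≠ 0`. -/
theorem qMZV_abs_convergent (q : ℝ) (hq0 : 0 < q) (hq1 : q < 1)
    (t : ℂ) (ht : 0 < t.re) (n : ℕ) (hn : 0 < n) (k : Fin n → ℤ)
    (hk : k ⟨0, hn⟩ ≠ 0) :
    Summable (fun m : {m : Fin n → ℕ //
        (∀ i j : Fin n, i < j → m j < m i) ∧ ∀ i, 0 < m i} =>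
      ‖Complex.exp (((∑ i, (|k i| : ℝ) * (m.1 i : ℝ)) : ℂ) * t * Real.log q) /
        ∏ i, ((1 - q ^ (m.1 i) : ℝ) : ℂ) ^ (k i)‖) := by
  have hlogq : Real.log q < 0 := Real.log_neg hq0 hq1
  set a : ℝ := t.re * Real.log q with ha_def
  have ha : a < 0 := mul_neg_of_pos_of_neg ht hlogq
  set s : ℝ := Real.exp (a / n) with hs_def
  have hs0 : 0 < s := Real.exp_pos _
  have hs1 : s < 1 := by
    apply Real.exp_lt_one_iff.mpr
    exact div_neg_of_neg_of_pos ha (by exact_mod_cast hn)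
  -- lower bound for denominator factors
  set c : ℝ := ∏ i, min 1 ((1 - q) ^ (k i)) with hc_def
  have h1q : 0 < 1 - q := by linarith
  have hc0 : 0 < c := Finset.prod_pos fun i _ =>
    lt_min one_pos (zpow_pos h1q _)
  -- the majorant
  have hmaj : Summable (fun m : {m : Fin n → ℕ //
      (∀ i j : Fin n, i < j → m j < m i) ∧ ∀ i, 0 < m i} =>
      c⁻¹ * ∏ i, s ^ (m.1 i)) := by
    have := ((summable_pi_geom s hs0.le hs1 n).mul_left c⁻¹).subtype
      {m : Fin n → ℕ | (∀ i j : Fin n, i < j → m j < m i) ∧ ∀ i, 0 < m i}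
    exact this.congr fun m => rfl
  refine Summable.of_nonneg_of_le (fun m => norm_nonneg _) (fun m => ?_) hmaj
  obtain ⟨m, hdec, hpos⟩ := m
  -- notation
  have hqm : ∀ i : Fin n, 0 < 1 - q ^ (m i) := by
    intro i
    have : q ^ (m i) < 1 := pow_lt_one₀ hq0.le hq1 (hpos i).ne'
    linarith
  -- compute the norm
  have hnum : ‖Complex.exp (((∑ i, (|k i| : ℝ) * (m i : ℝ)) : ℂ) * t * Real.log q)‖
      = Real.exp ((∑ i, (|k i| : ℝ) * (m i : ℝ)) * a) := by
    rw [Complex.norm_exp]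
    congr 1
    simp [ha_def]
    ring
  have hden : ‖∏ i, ((1 - q ^ (m i) : ℝ) : ℂ) ^ (k i)‖
      = ∏ i, (1 - q ^ (m i)) ^ (k i) := by
    rw [norm_prod]
    refine Finset.prod_congr rfl fun i _ => ?_
    rw [norm_zpow, Complex.norm_real, Real.norm_eq_abs, abs_of_pos (hqm i)]
  rw [norm_div, hnum, hden]
  -- denominator lower bound
  have hdenlb : c ≤ ∏ i, (1 - q ^ (m i)) ^ (k i) := by
    refine Finset.prod_le_prod (fun i _ => (lt_min one_pos (zpow_pos h1q _)).le)
      fun i _ => ?_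
    rcases le_or_gt 0 (k i) with hki | hki
    · refine (min_le_right _ _).trans ?_
      have hb : 1 - q ≤ 1 - q ^ (m i) := by
        have : q ^ (m i) ≤ q := pow_le_of_le_one hq0.le hq1.le (hpos i).ne'
        linarith
      lift k i to ℕ using hki with K hK
      simpa [zpow_natCast] using pow_le_pow_left₀ h1q.le hb K
    · refine (min_le_left _ _).trans ?_
      exact one_le_zpow_of_nonpos₀ (hqm i) (by linarith [pow_pos hq0 (m i)]) hki.le
  -- numerator upper bound
  have hS1 : (m ⟨0, hn⟩ : ℝ) ≤ ∑ i, (|k i| : ℝ) * (m i : ℝ) := by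
    have h1 : (1 : ℝ) ≤ (|k ⟨0, hn⟩| : ℝ) := by
      have : 1 ≤ |k ⟨0, hn⟩| := Int.one_le_abs hk
      exact_mod_cast this
    calc (m ⟨0, hn⟩ : ℝ) = 1 * (m ⟨0, hn⟩ : ℝ) := (one_mul _).symm
      _ ≤ (|k ⟨0, hn⟩| : ℝ) * (m ⟨0, hn⟩ : ℝ) :=
          mul_le_mul_of_nonneg_right h1 (Nat.cast_nonneg _)
      _ ≤ ∑ i, (|k i| : ℝ) * (m i : ℝ) := by
          refine Finset.single_le_sum (f := fun i => (|k i| : ℝ) * (m i : ℝ)) (fun i _ => ?_) (Finset.mem_univ _)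
          positivity
  have hmax : ∀ i : Fin n, m i ≤ m ⟨0, hn⟩ := by
    intro i
    rcases eq_or_ne i ⟨0, hn⟩ with rfl | hne
    · exact le_rfl
    · have : (⟨0, hn⟩ : Fin n) < i := by
        refine lt_of_le_of_ne (Fin.mk_le_of_le_val (Nat.zero_le _)) (Ne.symm hne)
      exact (hdec _ _ this).le
  have hsum_le : (∑ i, (m i : ℝ)) ≤ n * (m ⟨0, hn⟩ : ℝ) := by
    calc (∑ i, (m i : ℝ)) ≤ ∑ _i : Fin n, (m ⟨0, hn⟩ : ℝ) :=
          Finset.sum_le_sum fun i _ => by exact_mod_cast hmax i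
      _ = n * (m ⟨0, hn⟩ : ℝ) := by simp [mul_comm]
  have hnumub : Real.exp ((∑ i, (|k i| : ℝ) * (m i : ℝ)) * a) ≤ ∏ i, s ^ (m i) := by
    have hstep : (∑ i, (|k i| : ℝ) * (m i : ℝ)) * a ≤ (∑ i, (m i : ℝ)) * (a / n) := by
      have h1 : (m ⟨0, hn⟩ : ℝ) * a ≤ (∑ i, (m i : ℝ)) * (a / n) := by
        rw [mul_div_assoc', le_div_iff₀ (by exact_mod_cast hn : (0:ℝ) < n)]
        nlinarith [mul_le_mul_of_nonpos_right hsum_le ha.le]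
      calc (∑ i, (|k i| : ℝ) * (m i : ℝ)) * a ≤ (m ⟨0, hn⟩ : ℝ) * a :=
            mul_le_mul_of_nonpos_right hS1 ha.le
        _ ≤ _ := h1
    calc Real.exp ((∑ i, (|k i| : ℝ) * (m i : ℝ)) * a)
        ≤ Real.exp ((∑ i, (m i : ℝ)) * (a / n)) := Real.exp_le_exp.mpr hstep
      _ = ∏ i, s ^ (m i) := by
          rw [Finset.sum_mul, Real.exp_sum]
          refine Finset.prod_congr rfl fun i _ => ?_
          rw [hs_def, ← Real.exp_nat_mul, mul_comm]
  calc Real.exp ((∑ i, (|k i| : ℝ) * (m i : ℝ)) * a) / ∏ i, (1 - q ^ (m i)) ^ (k i)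
      ≤ (∏ i, s ^ (m i)) / c :=
        div_le_div₀ (Finset.prod_nonneg fun i _ => pow_nonneg hs0.le _) hnumub hc0 hdenlb
    _ = c⁻¹ * ∏ i, s ^ (m i) := by rw [div_eq_inv_mul]
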